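/- For an odd cycle C_n (n ≥ 3 odd), the number of mutual-visibility sets of cardinality 3 equals n(n²−1)/24. -/

import Mathlib

open SimpleGraph Polynomial

/-- Two vertices `u`, `v` are `X`-visible in `G` if some shortest `u`\u2013`v` path
has no internal vertex in `X`. -/
def SimpleGraph.XVisible {V : Type*} (G : SimpleGraph V) (X : Set V) (u v : V) : Prop :=
  ∃ p : G.Walk u v, p.IsPath ∧ p.length = G.dist u v ∧
    ∀ w ∈ p.support, w ∈ X → w = u ∨ w = v

/-- `X` is a mutual-visibility set of `G`. -/
def SimpleGraph.IsMutualVisibilitySet {V : Type*} (G : SimpleGraph V) (X : Set V) : Prop :=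
  ∀ u ∈ X, ∀ v ∈ X, G.XVisible X u v


variable {n : ℕ}

open Fin.CommRing

lemma fin_val_ne_zero [NeZero n] {u v : Fin n} (h : u ≠ v) : (u - v).val ≠ 0 := by
  intro hc
  exact h (sub_eq_zero.mp (Fin.ext (by rw [hc, Fin.val_zero])))

lemma fin_val_sub_add [NeZero n] {u v : Fin n} (h : u ≠ v) :
    (u - v).val + (v - u).val = n := by
  have h2 : ((u - v) + (v - u)).val = ((u - v).val + (v - u).val) % n := Fin.val_add _ _
  rw [show (u - v) + (v - u) = 0 by ring, Fin.val_zero] at h2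
  have h3 := fin_val_ne_zero h
  have h4 := fin_val_ne_zero h.symm
  have b1 := (u - v).isLt
  have b2 := (v - u).isLt
  have : (u - v).val + (v - u).val < 2 * n := by omega
  rcases Nat.lt_or_ge ((u - v).val + (v - u).val) n with h5 | h5
  · rw [Nat.mod_eq_of_lt h5] at h2; omega
  · have := Nat.mod_eq_sub_mod h5
    rw [this, Nat.mod_eq_of_lt (by omega)] at h2
    omega

lemma fin_sub_one_val [NeZero n] (hn : 2 ≤ n) {u : Fin n} (h : u ≠ 0) :
    (u - 1).val = u.val - 1 := by
  have h2 : (u - 1).val = (u.val + (n - (1 : Fin n).val)) % n := by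
    rw [Fin.sub_def]; simp [Nat.add_comm]
  have h1 : (1 : Fin n).val = 1 := by rw [Fin.val_one' n, Nat.mod_eq_of_lt hn]
  have hu : u.val ≠ 0 := fun hc => h (Fin.ext (by rw [hc, Fin.val_zero]))
  have b1 := u.isLt
  rw [h1] at h2
  rw [h2, show u.val + (n - 1) = (u.val - 1) + n by omega, Nat.add_mod_right,
    Nat.mod_eq_of_lt (by omega)]

lemma fin_add_one_val [NeZero n] {u : Fin n} :
    (u + 1).val ≤ u.val + 1 := by
  calc (u + 1).val = (u.val + (1 : Fin n).val) % n := Fin.val_add _ _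
  _ ≤ u.val + (1 : Fin n).val := Nat.mod_le _ _
  _ ≤ u.val + 1 := by have h := Nat.mod_le 1 n; rw [Fin.val_one' n]; omega

lemma fin_one_val (hn : 2 ≤ n) [NeZero n] : (1 : Fin n).val = 1 := by
  rw [Fin.val_one' n, Nat.mod_eq_of_lt hn]

lemma cycle_adj_succ [NeZero n] (hn : 2 ≤ n) (a : Fin n) :
    (cycleGraph n).Adj a (a + 1) := by
  rw [cycleGraph_adj']
  right
  rw [add_sub_cancel_left, fin_one_val hn]

/-- Walk along the cycle from `a` to `a + k` in positive direction. -/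
def arcWalk [NeZero n] (hn : 2 ≤ n) (a : Fin n) : (k : ℕ) → (cycleGraph n).Walk a (a + (k : Fin n))
  | 0 => Walk.nil.copy rfl (by simp)
  | (k+1) => (Walk.cons (cycle_adj_succ hn a) (arcWalk hn (a + 1) k)).copy rfl
      (by push_cast; ring)

lemma arcWalk_length [NeZero n] (hn : 2 ≤ n) (a : Fin n) (k : ℕ) :
    (arcWalk hn a k).length = k := by
  induction k generalizing a with
  | zero => simp [arcWalk]
  | succ k ih => simp [arcWalk, ih]

lemma arcWalk_support [NeZero n] (hn : 2 ≤ n) (a : Fin n) (k : ℕ) {z : Fin n} :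
    z ∈ (arcWalk hn a k).support ↔ ∃ i ≤ k, z = a + (i : Fin n) := by
  induction k generalizing a with
  | zero =>
    simp only [arcWalk, Walk.support_copy, Walk.support_nil, List.mem_singleton]
    constructor
    · rintro rfl; exact ⟨0, le_refl _, by simp⟩
    · rintro ⟨i, hi, rfl⟩; simp [Nat.le_zero.mp hi]
  | succ k ih =>
    simp only [arcWalk, Walk.support_copy, Walk.support_cons, List.mem_cons, ih]
    constructor
    · rintro (rfl | ⟨i, hi, rfl⟩)
      · exact ⟨0, by omega, by simp⟩
      · exact ⟨i + 1, by omega, by push_cast; ring⟩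
    · rintro ⟨i, hi, rfl⟩
      match i with
      | 0 => left; simp
      | (i+1) => right; exact ⟨i, by omega, by push_cast; ring⟩

/-- From adjacency in the cycle: the neighbor is `±1`. -/
lemma cycle_adj_cases [NeZero n] (hn : 2 ≤ n) {u u' : Fin n} (h : (cycleGraph n).Adj u u') :
    u' = u + 1 ∨ u = u' + 1 := by
  rw [cycleGraph_adj'] at h
  rcases h with h | h
  · right
    have h2 : u - u' = 1 := Fin.ext (by rw [h, fin_one_val hn])
    rw [← h2]; ring
  · left
    have h2 : u' - u = 1 := Fin.ext (by rw [h, fin_one_val hn])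
    rw [← h2]; ring

lemma cycle_walk_length_ge [NeZero n] (hn : 2 ≤ n) {u v : Fin n} (p : (cycleGraph n).Walk u v) :
    min (v - u).val (u - v).val ≤ p.length := by
  induction p with
  | nil => simp
  | @cons u u' v h q ih =>
    rw [Walk.length_cons]
    rcases eq_or_ne u' v with hne | hne
    · -- u adjacent to v
      rcases cycle_adj_cases hn h with he | he
      · have h1 : (v - u).val = 1 := by
          rw [← hne, he, add_sub_cancel_left, fin_one_val hn]
        have := min_le_left (v - u).val ((u - v)).val
        omega
      · have h1 : (u - v).val = 1 := by
          rw [← hne, he, add_sub_cancel_left, fin_one_val hn]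
        have := min_le_right (v - u).val ((u - v)).val
        omega
    · have hvne : v - u' ≠ 0 := fun hc => hne (sub_eq_zero.mp hc).symm
      have hune : u' - v ≠ 0 := fun hc => hne (sub_eq_zero.mp hc)
      rcases cycle_adj_cases hn h with he | he
      · -- u' = u + 1 : v - u = (v - u') + 1, u - v = (u' - v) - 1
        have e1 : v - u = (v - u') + 1 := by rw [he]; ring
        have e2 : u - v = (u' - v) - 1 := by rw [he]; ring
        have i1 : (v - u).val ≤ (v - u').val + 1 := by rw [e1]; exact fin_add_one_val
        have i2 : (u - v).val ≤ (u' - v).val + 1 := by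
          rw [e2, fin_sub_one_val hn hune]; omega
        omega
      · -- u = u' + 1 : v - u = (v - u') - 1, u - v = (u' - v) + 1
        have e1 : v - u = (v - u') - 1 := by rw [he]; ring
        have e2 : u - v = (u' - v) + 1 := by rw [he]; ring
        have i1 : (v - u).val ≤ (v - u').val + 1 := by
          rw [e1, fin_sub_one_val hn hvne]; omega
        have i2 : (u - v).val ≤ (u' - v).val + 1 := by rw [e2]; exact fin_add_one_val
        omega

lemma cycle_connected [NeZero n] : (cycleGraph n).Connected := by
  have h : n - 1 + 1 = n := Nat.sub_add_cancel (Nat.one_le_iff_ne_zero.mpr (NeZero.ne n))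
  have := cycleGraph_connected (n := n - 1)
  rwa [h] at this

lemma cycle_dist [NeZero n] (hn : 2 ≤ n) (u v : Fin n) :
    (cycleGraph n).dist u v = min (v - u).val (u - v).val := by
  apply le_antisymm
  · apply le_min
    · have h := SimpleGraph.dist_le ((arcWalk hn u (v - u).val).copy rfl
        (show u + (((v - u).val : ℕ) : Fin n) = v by rw [Fin.cast_val_eq_self]; ring))
      rwa [Walk.length_copy, arcWalk_length] at h
    · have h := SimpleGraph.dist_le (((arcWalk hn v (u - v).val).copy rfl
        (show v + (((u - v).val : ℕ) : Fin n) = u by rw [Fin.cast_val_eq_self]; ring)).reverse)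
      rwa [Walk.length_reverse, Walk.length_copy, arcWalk_length] at h
  · obtain ⟨p, hp⟩ := (cycle_connected (n := n)).exists_walk_length_eq_dist u v
    rw [← hp]
    exact cycle_walk_length_ge hn p

lemma xvisible_symm {V : Type*} {G : SimpleGraph V} {X : Set V} {u v : V}
    (h : G.XVisible X u v) : G.XVisible X v u := by
  obtain ⟨p, hp, hl, hs⟩ := h
  exact ⟨p.reverse, hp.reverse, by rw [Walk.length_reverse, hl, SimpleGraph.dist_comm],
    fun w hw hX => (hs w (by simpa using hw) hX).symm⟩

lemma xvisible_refl {V : Type*} {G : SimpleGraph V} {X : Set V} (u : V) :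
    G.XVisible X u u :=
  ⟨Walk.nil, Walk.IsPath.nil, by simp [SimpleGraph.dist_self], fun w hw _ => Or.inl (by simpa using hw)⟩

/-- If a walk in the cycle avoids `c`, then the "cut" coordinates of its endpoints are
close. -/
lemma cycle_avoid_bound [NeZero n] (hn : 2 ≤ n) {u v c : Fin n} (p : (cycleGraph n).Walk u v)
    (hc : c ∉ p.support) :
    (u - c - 1).val ≤ (v - c - 1).val + p.length ∧
      (v - c - 1).val ≤ (u - c - 1).val + p.length := by
  induction p with
  | nil => simp
  | @cons u u' v h q ih =>
    rw [Walk.support_cons, List.mem_cons] at hc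
    push_neg at hc
    obtain ⟨hcu, hcq⟩ := hc
    obtain ⟨i1, i2⟩ := ih hcq
    have hcu' : c ≠ u' := fun hc => hcq (by rw [hc]; exact Walk.start_mem_support q)
    rw [Walk.length_cons]
    -- step : |φ u - φ u'| = 1
    have step : (u - c - 1).val ≤ (u' - c - 1).val + 1 ∧
        (u' - c - 1).val ≤ (u - c - 1).val + 1 := by
      rcases cycle_adj_cases hn h with he | he
      · -- u' = u + 1, so u' - c - 1 = u - c, and u - c ≠ 0
        have e : u' - c - 1 = u - c := by rw [he]; ring
        have hne : u - c ≠ 0 := fun h0 => hcu (sub_eq_zero.mp h0).symm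
        have : (u - c - 1).val = (u - c).val - 1 := fin_sub_one_val hn hne
        have h0 : (u - c).val ≠ 0 := fin_val_ne_zero (fun hh => hcu hh.symm)
        rw [e]
        omega
      · -- u = u' + 1, so u - c - 1 = u' - c, u' - c ≠ 0
        have e : u - c - 1 = u' - c := by rw [he]; ring
        have hne : u' - c ≠ 0 := fun h0 => hcu' (sub_eq_zero.mp h0).symm
        have : (u' - c - 1).val = (u' - c).val - 1 := fin_sub_one_val hn hne
        have h0 : (u' - c).val ≠ 0 := fin_val_ne_zero (fun hh => hcu' hh.symm)
        rw [e]
        omega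
    omega

lemma visible_of_short_arc [NeZero n] {m : ℕ} (hm : 1 ≤ m) (hn : n = 2*m+1)
    {u v w : Fin n} {X : Set (Fin n)}
    (hX : ∀ z ∈ X, z = u ∨ z = v ∨ z = w)
    (h1 : 1 ≤ (v - u).val) (h2 : (v - u).val ≤ m) (h3 : (v - u).val < (w - u).val) :
    (cycleGraph n).XVisible X u v := by
  have hn2 : 2 ≤ n := by omega
  have huv : u ≠ v := by
    intro h; rw [h] at h1; simp at h1
  set x := (v - u).val with hx
  have hb : (u - v).val = n - x := by
    have := fin_val_sub_add huv
    omega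
  have hdist : (cycleGraph n).dist u v = x := by
    rw [cycle_dist hn2, ← hx, hb]
    omega
  refine ⟨(arcWalk hn2 u x).copy rfl
    (show u + ((x : ℕ) : Fin n) = v by rw [hx, Fin.cast_val_eq_self]; ring), ?_, ?_, ?_⟩
  · apply Walk.isPath_of_length_eq_dist
    rw [Walk.length_copy, arcWalk_length, hdist]
  · rw [Walk.length_copy, arcWalk_length, hdist]
  · intro z hz hzX
    rcases hX z hzX with rfl | rfl | rfl
    · exact Or.inl rfl
    · exact Or.inr rfl
    · -- w is on the support: contradiction
      exfalso
      rw [Walk.support_copy, arcWalk_support] at hz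
      obtain ⟨i, hi, hwi⟩ := hz
      have : (z - u).val = i := by
        rw [hwi, add_sub_cancel_left, Fin.val_natCast, Nat.mod_eq_of_lt (by omega)]
      omega

lemma arcs_le_of_mv [NeZero n] {m : ℕ} (hm : 1 ≤ m) (hn : n = 2*m+1) {a b c : Fin n}
    (hab : a ≠ b) (hbc : b ≠ c) (hca : c ≠ a)
    (hsum : (b - a).val + (c - b).val + (a - c).val = n)
    (hmv : (cycleGraph n).IsMutualVisibilitySet {a, b, c}) :
    (b - a).val ≤ m := by
  have hn2 : 2 ≤ n := by omega
  by_contra hx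
  push_neg at hx
  obtain ⟨p, hp, hl, hs⟩ := hmv a (by simp) b (by simp)
  have hcp : c ∉ p.support := by
    intro hc
    rcases hs c hc (by simp) with h | h
    · exact hca h
    · exact hbc h.symm
  have hbound := (cycle_avoid_bound hn2 p hcp).2
  have h1 : (b - c).val + (c - b).val = n := fin_val_sub_add hbc
  have h2 : (a - b).val + (b - a).val = n := fin_val_sub_add hab
  have hbc0 : b - c ≠ 0 := sub_ne_zero.mpr hbc
  have hac0 : a - c ≠ 0 := sub_ne_zero.mpr (Ne.symm hca)
  have e1 : (b - c - 1).val = (b - c).val - 1 := fin_sub_one_val hn2 hbc0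
  have e2 : (a - c - 1).val = (a - c).val - 1 := fin_sub_one_val hn2 hac0
  have hx2 : (c - b).val ≠ 0 := fin_val_ne_zero (Ne.symm hbc)
  have hx3 : (a - c).val ≠ 0 := fin_val_ne_zero (Ne.symm hca)
  have hx1 : (b - a).val ≠ 0 := fin_val_ne_zero (Ne.symm hab)
  have hlen : p.length = n - (b - a).val := by
    rw [hl, cycle_dist hn2]
    omega
  omega

lemma arcs_sum_cases [NeZero n] {a b c : Fin n} (hab : a ≠ b) (hbc : b ≠ c) (hca : c ≠ a) :
    (b - a).val + (c - b).val + (a - c).val = n ∨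
      (c - a).val + (b - c).val + (a - b).val = n := by
  have k1 := fin_val_sub_add hab
  have k2 := fin_val_sub_add hbc
  have k3 := fin_val_sub_add hca
  have hz : (((b - a).val + (c - b).val + (a - c).val : ℕ) : Fin n) = 0 := by
    push_cast [Fin.cast_val_eq_self]
    ring
  rw [Fin.natCast_eq_zero] at hz
  obtain ⟨k, hk⟩ := hz
  have b1 : (b - a).val ≠ 0 := fin_val_ne_zero (Ne.symm hab)
  have b2 : (c - b).val ≠ 0 := fin_val_ne_zero (Ne.symm hbc)
  have b3 : (a - c).val ≠ 0 := fin_val_ne_zero (Ne.symm hca)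
  have c1 := (b - a).isLt
  have c2 := (c - b).isLt
  have c3 := (a - c).isLt
  have hk0 : k ≠ 0 := by rintro rfl; omega
  have hk3 : k < 3 := by
    have h33 : n * k < n * 3 := by omega
    exact Nat.lt_of_mul_lt_mul_left h33
  interval_cases k <;> omega

lemma val_add_arc [NeZero n] {x y : Fin n} (h : x.val + y.val < n) :
    (x + y).val = x.val + y.val := Fin.val_add_eq_of_add_lt h

lemma mv_of_arcs_le [NeZero n] {m : ℕ} (hm : 1 ≤ m) (hn : n = 2*m+1) {a b c : Fin n}
    (h1 : 1 ≤ (b - a).val) (h2 : 1 ≤ (c - b).val) (h3 : 1 ≤ (a - c).val)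
    (hsum : (b - a).val + (c - b).val + (a - c).val = n)
    (hm1 : (b - a).val ≤ m) (hm2 : (c - b).val ≤ m) (hm3 : (a - c).val ≤ m) :
    (cycleGraph n).IsMutualVisibilitySet {a, b, c} := by
  have e1 : (c - a).val = (b - a).val + (c - b).val := by
    rw [show c - a = (b - a) + (c - b) by ring]
    exact val_add_arc (by omega)
  have e2 : (a - b).val = (c - b).val + (a - c).val := by
    rw [show a - b = (c - b) + (a - c) by ring]
    exact val_add_arc (by omega)
  have e3 : (b - c).val = (a - c).val + (b - a).val := by
    rw [show b - c = (a - c) + (b - a) by ring]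
    exact val_add_arc (by omega)
  have hXa : ∀ z ∈ ({a, b, c} : Set (Fin n)), z = a ∨ z = b ∨ z = c := by
    intro z hz; simpa using hz
  have vab : (cycleGraph n).XVisible {a, b, c} a b :=
    visible_of_short_arc hm hn (w := c) hXa h1 hm1 (by omega)
  have vbc : (cycleGraph n).XVisible {a, b, c} b c :=
    visible_of_short_arc hm hn (w := a) (fun z hz => by
      rcases hXa z hz with h | h | h
      exacts [Or.inr (Or.inr h), Or.inl h, Or.inr (Or.inl h)]) h2 hm2 (by omega)
  have vca : (cycleGraph n).XVisible {a, b, c} c a :=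
    visible_of_short_arc hm hn (w := b) (fun z hz => by
      rcases hXa z hz with h | h | h
      exacts [Or.inr (Or.inl h), Or.inr (Or.inr h), Or.inl h]) h3 hm3 (by omega)
  intro u hu v hv
  rcases hXa u hu with rfl | rfl | rfl <;> rcases hXa v hv with rfl | rfl | rfl
  · exact xvisible_refl _
  · exact vab
  · exact xvisible_symm vca
  · exact xvisible_symm vab
  · exact xvisible_refl _
  · exact vbc
  · exact vca
  · exact xvisible_symm vbc
  · exact xvisible_refl _

/-- The parameter set: pairs of gap sums. -/
def Pset (m : ℕ) : Finset (ℕ × ℕ) :=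
  (Finset.Icc 1 m ×ˢ Finset.Icc (m+1) (2*m)).filter (fun p => p.2 - p.1 ≤ m)

lemma mem_Pset {m : ℕ} {p : ℕ × ℕ} :
    p ∈ Pset m ↔ 1 ≤ p.1 ∧ p.1 ≤ m ∧ m + 1 ≤ p.2 ∧ p.2 ≤ 2*m ∧ p.2 - p.1 ≤ m := by
  simp only [Pset, Finset.mem_filter, Finset.mem_product, Finset.mem_Icc]
  tauto

lemma Pset_card (m : ℕ) : 2 * (Pset m).card = m * (m + 1) := by
  have h : (Pset m).card = ((Finset.Icc 1 m).sigma (fun t => Finset.Icc 1 t)).card := by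
    apply Finset.card_bij' (i := fun (p : ℕ × ℕ) (_ : p ∈ Pset m) =>
        (⟨2*m+1-p.2, p.1 + m + 1 - p.2⟩ : Σ _ : ℕ, ℕ))
      (j := fun (q : Σ _ : ℕ, ℕ) (_ : q ∈ (Finset.Icc 1 m).sigma (fun t => Finset.Icc 1 t)) =>
        ((q.2 + m - q.1, 2*m+1-q.1) : ℕ × ℕ))
    · intro p hp
      rw [mem_Pset] at hp
      simp only [Finset.mem_sigma, Finset.mem_Icc]
      omega
    · intro q hq
      simp only [Finset.mem_sigma, Finset.mem_Icc] at hq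
      rw [mem_Pset]
      simp only
      omega
    · intro p hp
      rw [mem_Pset] at hp
      simp only
      ext <;> simp <;> omega
    · intro q hq
      simp only [Finset.mem_sigma, Finset.mem_Icc] at hq
      simp only
      ext <;> simp <;> omega
  rw [h, Finset.card_sigma]
  simp only [Nat.card_Icc]
  have h2 : ∑ t ∈ Finset.Icc 1 m, (t + 1 - 1) = ∑ t ∈ Finset.Icc 1 m, t := by
    apply Finset.sum_congr rfl; intros; omega
  rw [h2]
  have h3 : ∑ t ∈ Finset.Icc 1 m, t = ∑ t ∈ Finset.range (m+1), t := by
    apply Finset.sum_subset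
    · intro t ht
      simp only [Finset.mem_Icc] at ht
      simp only [Finset.mem_range]
      omega
    · intro t ht hnt
      simp only [Finset.mem_range] at ht
      simp only [Finset.mem_Icc] at hnt
      omega
  rw [h3]
  calc 2 * ∑ t ∈ Finset.range (m+1), t = (∑ t ∈ Finset.range (m+1), t) * 2 := by ring
    _ = (m+1) * ((m+1) - 1) := Finset.sum_range_id_mul_two (m+1)
    _ = m * (m+1) := by rw [Nat.add_sub_cancel]; ring

def fmap (n : ℕ) [NeZero n] : Fin n × ℕ × ℕ → Finset (Fin n) :=
  fun t => {t.1, t.1 + ((t.2.1 : ℕ) : Fin n), t.1 + ((t.2.2 : ℕ) : Fin n)}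

lemma fmap_good [NeZero n] {m : ℕ} (hm : 1 ≤ m) (hn : n = 2*m+1) {a : Fin n} {x y : ℕ}
    (hp : (x, y) ∈ Pset m) :
    (fmap n (a, x, y)).card = 3 ∧
      (cycleGraph n).IsMutualVisibilitySet ↑(fmap n (a, x, y)) := by
  rw [mem_Pset] at hp
  simp only at hp
  set b := a + ((x : ℕ) : Fin n) with hb
  set c := a + ((y : ℕ) : Fin n) with hc
  have hxn : x < n := by omega
  have hyn : y < n := by omega
  have hba : (b - a).val = x := by
    rw [hb, add_sub_cancel_left, Fin.val_natCast, Nat.mod_eq_of_lt hxn]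
  have hca : (c - a).val = y := by
    rw [hc, add_sub_cancel_left, Fin.val_natCast, Nat.mod_eq_of_lt hyn]
  have hcb : (c - b).val = y - x := by
    have e : c - b = ((y - x : ℕ) : Fin n) := by
      rw [Nat.cast_sub (by omega : x ≤ y), hb, hc]
      ring
    rw [e, Fin.val_natCast, Nat.mod_eq_of_lt (by omega)]
  have hab : a ≠ b := by
    intro h; rw [← h, sub_self] at hba; simp [Fin.val_zero] at hba; omega
  have hac : a ≠ c := by
    intro h; rw [← h, sub_self] at hca; simp [Fin.val_zero] at hca; omega
  have hbc : b ≠ c := by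
    intro h; rw [h, sub_self] at hcb; simp [Fin.val_zero] at hcb; omega
  have hacv : (a - c).val = n - y := by
    have := fin_val_sub_add hac
    omega
  constructor
  · rw [Finset.card_eq_three]
    exact ⟨a, b, c, hab, hac, hbc, rfl⟩
  · have hcoe : (↑(fmap n (a, x, y)) : Set (Fin n)) = {a, b, c} := by
      simp [fmap, hb, hc]
    rw [hcoe]
    exact mv_of_arcs_le hm hn (by omega) (by omega) (by omega)
      (by omega) (by omega) (by omega) (by omega)

lemma fiber_eq [NeZero n] {m : ℕ} (hm : 1 ≤ m) (hn : n = 2*m+1) {a b c : Fin n}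
    (hab : a ≠ b) (hbc : b ≠ c) (hca : c ≠ a)
    (hsum : (b - a).val + (c - b).val + (a - c).val = n)
    (hmv : (cycleGraph n).IsMutualVisibilitySet ↑({a, b, c} : Finset (Fin n))) :
    ((Finset.univ ×ˢ Pset m).filter (fun t => fmap n t = {a, b, c})) =
      ({((a, ((b-a).val, (b-a).val + (c-b).val)) : Fin n × ℕ × ℕ),
       (b, ((c-b).val, (c-b).val + (a-c).val)),
       (c, ((a-c).val, (a-c).val + (b-a).val))} : Finset (Fin n × ℕ × ℕ)) := by
  have hn2 : 2 ≤ n := by omega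
  set x1 := (b - a).val with hx1
  set x2 := (c - b).val with hx2
  set x3 := (a - c).val with hx3
  have hmv' : (cycleGraph n).IsMutualVisibilitySet {a, b, c} := by
    have : (↑({a, b, c} : Finset (Fin n)) : Set (Fin n)) = {a, b, c} := by simp
    rwa [this] at hmv
  have h1 : 1 ≤ x1 := Nat.one_le_iff_ne_zero.mpr (fin_val_ne_zero (Ne.symm hab))
  have h2 : 1 ≤ x2 := Nat.one_le_iff_ne_zero.mpr (fin_val_ne_zero (Ne.symm hbc))
  have h3 : 1 ≤ x3 := Nat.one_le_iff_ne_zero.mpr (fin_val_ne_zero (Ne.symm hca))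
  have hm1 : x1 ≤ m := arcs_le_of_mv hm hn hab hbc hca hsum hmv'
  have hm2 : x2 ≤ m := by
    have hset : ({b, c, a} : Set (Fin n)) = {a, b, c} := by ext z; simp; tauto
    exact arcs_le_of_mv hm hn hbc hca hab (by omega) (by rwa [hset])
  have hm3 : x3 ≤ m := by
    have hset : ({c, a, b} : Set (Fin n)) = {a, b, c} := by ext z; simp; tauto
    exact arcs_le_of_mv hm hn hca hab hbc (by omega) (by rwa [hset])
  have e1 : (c - a).val = x1 + x2 := by
    rw [show c - a = (b - a) + (c - b) by ring]
    exact val_add_arc (by omega)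
  have e2 : (a - b).val = x2 + x3 := by
    rw [show a - b = (c - b) + (a - c) by ring]
    exact val_add_arc (by omega)
  have e3 : (b - c).val = x3 + x1 := by
    rw [show b - c = (a - c) + (b - a) by ring]
    exact val_add_arc (by omega)
  ext ⟨d, x, y⟩
  simp only [Finset.mem_filter, Finset.mem_product, Finset.mem_univ, true_and, mem_Pset,
    Finset.mem_insert, Finset.mem_singleton, Prod.mk.injEq]
  constructor
  · rintro ⟨⟨hx1', hxm, hym1, hym2, hyx⟩, hf⟩
    have hxn : x < n := by omega
    have hyn : y < n := by omega
    -- membership of the three points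
    have hdmem : d ∈ ({a, b, c} : Finset (Fin n)) := by
      rw [← hf]; simp [fmap]
    have hdx : d + ((x : ℕ) : Fin n) ∈ ({a, b, c} : Finset (Fin n)) := by
      rw [← hf]; simp [fmap]
    have hdy : d + ((y : ℕ) : Fin n) ∈ ({a, b, c} : Finset (Fin n)) := by
      rw [← hf]; simp [fmap]
    have hvx : ∀ z : Fin n, d + ((x : ℕ) : Fin n) = z → (z - d).val = x := by
      intro z hz
      rw [← hz, add_sub_cancel_left, Fin.val_natCast, Nat.mod_eq_of_lt hxn]
    have hvy : ∀ z : Fin n, d + ((y : ℕ) : Fin n) = z → (z - d).val = y := by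
      intro z hz
      rw [← hz, add_sub_cancel_left, Fin.val_natCast, Nat.mod_eq_of_lt hyn]
    simp only [Finset.mem_insert, Finset.mem_singleton] at hdmem hdx hdy
    have hself : ∀ z : Fin n, (z - z).val = 0 := fun z => by simp [Fin.val_zero]
    rcases hdmem with rfl | rfl | rfl
    · -- d = a
      left
      rcases hdx with h | h | h
      · exact absurd (hvx d h) (by rw [hself]; omega)
      · have hx1e := hvx b h
        rcases hdy with h' | h' | h'
        · exact absurd (hvy d h') (by rw [hself]; omega)
        · have h0 := hvy b h'; omega
        · have h0 := hvy c h'; rw [e1] at h0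
          exact ⟨rfl, by omega, by omega⟩
      · have h0 := hvx c h; rw [e1] at h0; omega
    · -- d = b
      right; left
      rcases hdx with h | h | h
      · have h0 := hvx a h; rw [e2] at h0; omega
      · exact absurd (hvx d h) (by rw [hself]; omega)
      · have hx2e := hvx c h
        rcases hdy with h' | h' | h'
        · have h0 := hvy a h'; rw [e2] at h0
          exact ⟨rfl, by omega, by omega⟩
        · exact absurd (hvy d h') (by rw [hself]; omega)
        · have h0 := hvy c h'; omega
    · -- d = c
      right; right
      rcases hdx with h | h | h
      · have hx3e := hvx a h
        rcases hdy with h' | h' | h'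
        · have h0 := hvy a h'; omega
        · have h0 := hvy b h'; rw [e3] at h0
          exact ⟨rfl, by omega, by omega⟩
        · exact absurd (hvy d h') (by rw [hself]; omega)
      · have h0 := hvx b h; rw [e3] at h0; omega
      · exact absurd (hvx d h) (by rw [hself]; omega)
  · have hcast1 : ((x1 : ℕ) : Fin n) = b - a := Fin.cast_val_eq_self _
    have hcast2 : ((x2 : ℕ) : Fin n) = c - b := Fin.cast_val_eq_self _
    have hcast3 : ((x3 : ℕ) : Fin n) = a - c := Fin.cast_val_eq_self _
    rintro (⟨rfl, rfl, rfl⟩ | ⟨rfl, rfl, rfl⟩ | ⟨rfl, rfl, rfl⟩)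
    · refine ⟨⟨h1, hm1, by omega, by omega, by omega⟩, ?_⟩
      simp only [fmap, Nat.cast_add, hcast1, hcast2]
      rw [show d + (b - d) = b by ring, show d + (b - d + (c - b)) = c by ring]
    · refine ⟨⟨h2, hm2, by omega, by omega, by omega⟩, ?_⟩
      simp only [fmap, Nat.cast_add, hcast2, hcast3]
      rw [show d + (c - d) = c by ring, show d + (c - d + (a - c)) = a by ring]
      ext z; simp; tauto
    · refine ⟨⟨h3, hm3, by omega, by omega, by omega⟩, ?_⟩
      simp only [fmap, Nat.cast_add, hcast3, hcast1]
      rw [show d + (a - d) = a by ring, show d + (a - d + (b - a)) = b by ring]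
      ext z; simp; tauto

lemma fiber_card [NeZero n] {m : ℕ} (hm : 1 ≤ m) (hn : n = 2*m+1) {X : Finset (Fin n)}
    (hX : X.card = 3) (hmv : (cycleGraph n).IsMutualVisibilitySet ↑X) :
    ((Finset.univ ×ˢ Pset m).filter (fun t => fmap n t = X)).card = 3 := by
  obtain ⟨a, b, c, hab, hac, hbc, rfl⟩ := Finset.card_eq_three.mp hX
  rcases arcs_sum_cases hab hbc hac.symm with hsum | hsum
  · rw [fiber_eq hm hn hab hbc hac.symm hsum hmv]
    rw [Finset.card_insert_of_notMem (by simp [Prod.mk.injEq, hab, hac]),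
      Finset.card_insert_of_notMem (by simp [Prod.mk.injEq, hbc]),
      Finset.card_singleton]
  · have hset : ({a, c, b} : Finset (Fin n)) = {a, b, c} := by ext z; simp; tauto
    rw [← hset] at hmv ⊢
    rw [fiber_eq hm hn hac hbc.symm hab.symm hsum hmv]
    rw [Finset.card_insert_of_notMem (by simp [Prod.mk.injEq, hac, hab]),
      Finset.card_insert_of_notMem (by simp [Prod.mk.injEq, hbc.symm]),
      Finset.card_singleton]



open scoped Classical in
/-- The number of mutual-visibility sets of cardinality 3 (the maximum) in the cycle `C_n`. -/
noncomputable def rmuC (n : ℕ) : ℕ :=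
  (Finset.univ.filter (fun X : Finset (Fin n) =>
    X.card = 3 ∧ (cycleGraph n).IsMutualVisibilitySet ↑X)).card

theorem rmu_odd_cycle (n : ℕ) (hn : 3 ≤ n) (hodd : Odd n) :
    24 * rmuC n = n * (n ^ 2 - 1) := by
  classical
  obtain ⟨m, hmn⟩ := hodd
  have hmn' : n = 2 * m + 1 := by omega
  have hm1 : 1 ≤ m := by omega
  haveI : NeZero n := ⟨by omega⟩
  unfold rmuC
  set S := Finset.univ.filter (fun X : Finset (Fin n) =>
    X.card = 3 ∧ (cycleGraph n).IsMutualVisibilitySet ↑X) with hS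
  have key : ((Finset.univ : Finset (Fin n)) ×ˢ Pset m).card = ∑ X ∈ S, (((Finset.univ : Finset (Fin n)) ×ˢ Pset m).filter
      (fun t => fmap n t = X)).card := by
    apply Finset.card_eq_sum_card_fiberwise
    rintro ⟨a, x, y⟩ ht
    rw [Finset.mem_coe, Finset.mem_product] at ht
    obtain ⟨hc3, hmv⟩ := fmap_good hm1 hmn' ht.2
    rw [Finset.mem_coe, hS, Finset.mem_filter]
    exact ⟨Finset.mem_univ _, hc3, hmv⟩
  have key2 : ((Finset.univ : Finset (Fin n)) ×ˢ Pset m).card = S.card * 3 := by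
    rw [key]
    have hall : ∀ X ∈ S, ((((Finset.univ : Finset (Fin n)) ×ˢ Pset m).filter
        (fun t => fmap n t = X)).card) = 3 := by
      intro X hX
      rw [hS, Finset.mem_filter] at hX
      exact fiber_card hm1 hmn' hX.2.1 hX.2.2
    rw [Finset.sum_congr rfl hall, Finset.sum_const, smul_eq_mul]
  have key3 : n * (Pset m).card = S.card * 3 := by
    rw [← key2, Finset.card_product, Finset.card_univ, Fintype.card_fin]
  have hP := Pset_card m
  have hsq : n ^ 2 = 4 * (m * (m + 1)) + 1 := by subst hmn'; ring
  calc 24 * S.card = 8 * (S.card * 3) := by ring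
    _ = 8 * (n * (Pset m).card) := by rw [key3]
    _ = n * (8 * (Pset m).card) := by ring
    _ = n * (n ^ 2 - 1) := by
        congr 1
        omega
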